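/- Let γ(s,t) be an arclength-parametrized inextensible flow of pseudo null curves in E⁴₁ with pseudo null Frenet frame {T, N, B₁, B₂}, curvatures k₁ = 1, k₂, k₃, flow ∂γ/∂t = α₁T + α₂N + α₃B₁ + α₄B₂ (so ∂α₁/∂s = α₄), and ψ₁ = ⟨∂N/∂t, B₁⟩, ψ₂ = ⟨∂N/∂t, B₂⟩, ψ₃ = ⟨∂B₁/∂t, B₂⟩. Then ∂ψ₂/∂s = ∂α₄/∂s − α₃k₂ − ψ₁k₃ + ψ₃k₂. -/

import Mathlib

/-!
Formalization of inextensible flows of partially null / pseudo null curves in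
Minkowski space-time `E⁴₁` (ℝ⁴ with signature (-,+,+,+)).
-/

noncomputable section

/-- The Minkowski bilinear form on `ℝ⁴` with signature `(-,+,+,+)`. -/
def mink (v w : Fin 4 → ℝ) : ℝ :=
  -(v 0 * w 0) + v 1 * w 1 + v 2 * w 2 + v 3 * w 3

/-- The Minkowski norm `‖v‖ = √|⟨v,v⟩|`. -/
def mnorm (v : Fin 4 → ℝ) : ℝ := Real.sqrt |mink v v|


variable {E : Type*} [NormedAddCommGroup E] [NormedSpace ℝ E]

lemma one_le_inf : (1 : WithTop ℕ∞) ≤ ((⊤ : ℕ∞) : WithTop ℕ∞) :=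
  WithTop.coe_le_coe.mpr le_top

lemma two_le_inf : (2 : WithTop ℕ∞) ≤ ((⊤ : ℕ∞) : WithTop ℕ∞) :=
  WithTop.coe_le_coe.mpr le_top

lemma inf_add_one_le : ((⊤ : ℕ∞) : WithTop ℕ∞) + 1 ≤ ((⊤ : ℕ∞) : WithTop ℕ∞) := by
  rw [← WithTop.coe_one, ← WithTop.coe_add]
  exact WithTop.coe_le_coe.mpr le_top

lemma diffAt_fst {f : ℝ → ℝ → E}
    (hf : ContDiff ℝ (⊤ : ℕ∞) (fun p : ℝ × ℝ => f p.1 p.2)) (s t : ℝ) :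
    DifferentiableAt ℝ (fun x => f x t) s := by
  have h1 : DifferentiableAt ℝ (fun p : ℝ × ℝ => f p.1 p.2) (s, t) :=
    (hf.differentiable (by simp)) (s, t)
  have h2 : DifferentiableAt ℝ (fun x : ℝ => ((x, t) : ℝ × ℝ)) s :=
    differentiableAt_fun_id.prodMk (differentiableAt_const t)
  exact h1.comp s h2

lemma diffAt_snd {f : ℝ → ℝ → E}
    (hf : ContDiff ℝ (⊤ : ℕ∞) (fun p : ℝ × ℝ => f p.1 p.2)) (s t : ℝ) :
    DifferentiableAt ℝ (fun y => f s y) t := by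
  have h1 : DifferentiableAt ℝ (fun p : ℝ × ℝ => f p.1 p.2) (s, t) :=
    (hf.differentiable (by simp)) (s, t)
  exact h1.comp t (((differentiableAt_const s).prodMk differentiableAt_id))

/-- partial derivative in first variable as fderiv along (1,0) -/
lemma hasDeriv_fst {f : ℝ → ℝ → E}
    (hf : ContDiff ℝ (⊤ : ℕ∞) (fun p : ℝ × ℝ => f p.1 p.2)) (s t : ℝ) :
    HasDerivAt (fun x => f x t)
      (fderiv ℝ (fun p : ℝ × ℝ => f p.1 p.2) (s, t) (1, 0)) s := by
  have h1 : HasFDerivAt (fun p : ℝ × ℝ => f p.1 p.2)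
      (fderiv ℝ (fun p : ℝ × ℝ => f p.1 p.2) (s, t)) (s, t) :=
    ((hf.differentiable (by simp)) (s, t)).hasFDerivAt
  have h2 : HasDerivAt (fun x : ℝ => ((x, t) : ℝ × ℝ)) (1, 0) s :=
    HasDerivAt.prodMk (hasDerivAt_id s) (hasDerivAt_const s t)
  exact h1.comp_hasDerivAt s h2

lemma hasDeriv_snd {f : ℝ → ℝ → E}
    (hf : ContDiff ℝ (⊤ : ℕ∞) (fun p : ℝ × ℝ => f p.1 p.2)) (s t : ℝ) :
    HasDerivAt (fun y => f s y)
      (fderiv ℝ (fun p : ℝ × ℝ => f p.1 p.2) (s, t) (0, 1)) t := by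
  have h1 : HasFDerivAt (fun p : ℝ × ℝ => f p.1 p.2)
      (fderiv ℝ (fun p : ℝ × ℝ => f p.1 p.2) (s, t)) (s, t) :=
    ((hf.differentiable (by simp)) (s, t)).hasFDerivAt
  have h2 : HasDerivAt (fun y : ℝ => ((s, y) : ℝ × ℝ)) (0, 1) t :=
    HasDerivAt.prodMk (hasDerivAt_const t s) (hasDerivAt_id t)
  exact h1.comp_hasDerivAt t h2

/-- Clairaut: the mixed partial derivative, with swap. -/
lemma hasDerivAt_mixed {f : ℝ → ℝ → E}
    (hf : ContDiff ℝ (⊤ : ℕ∞) (fun p : ℝ × ℝ => f p.1 p.2)) (s t : ℝ) :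
    HasDerivAt (fun x => deriv (fun y => f x y) t)
      (deriv (fun y => deriv (fun x => f x y) s) t) s := by
  set F := fun p : ℝ × ℝ => f p.1 p.2 with hF
  have hG : ContDiff ℝ (⊤ : ℕ∞) (fderiv ℝ F) := hf.fderiv_right inf_add_one_le
  -- functions picking out directional derivatives
  have key1 : (fun x => deriv (fun y => f x y) t) = fun x => fderiv ℝ F (x, t) (0, 1) := by
    funext x; exact (hasDeriv_snd hf x t).deriv
  have key2 : (fun y => deriv (fun x => f x y) s) = fun y => fderiv ℝ F (s, y) (1, 0) := by
    funext y; exact (hasDeriv_fst hf s y).deriv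
  rw [key1, key2]
  -- H v := p ↦ fderiv F p v is smooth
  have hH : ∀ v : ℝ × ℝ, ContDiff ℝ (⊤ : ℕ∞) (fun p => fderiv ℝ F p v) := fun v =>
    hG.clm_apply contDiff_const
  -- derivative of x ↦ fderiv F (x,t) (0,1) at s
  have h1 : HasDerivAt (fun x => fderiv ℝ F (x, t) (0, 1))
      (fderiv ℝ (fun p => fderiv ℝ F p (0, 1)) (s, t) (1, 0)) s :=
    hasDeriv_fst (f := fun a b => fderiv ℝ F (a, b) (0, 1)) (hH (0,1)) s t
  have h2 : HasDerivAt (fun y => fderiv ℝ F (s, y) (1, 0))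
      (fderiv ℝ (fun p => fderiv ℝ F p (1, 0)) (s, t) (0, 1)) t :=
    hasDeriv_snd (f := fun a b => fderiv ℝ F (a, b) (1, 0)) (hH (1,0)) s t
  have e1 : ∀ v w : ℝ × ℝ, fderiv ℝ (fun p => fderiv ℝ F p v) (s, t) w
      = fderiv ℝ (fderiv ℝ F) (s, t) w v := by
    intro v w
    have := fderiv_clm_apply (c := fderiv ℝ F) (u := fun _ : ℝ × ℝ => v)
      ((hG.differentiable (by simp)) (s,t)) (differentiableAt_const v)
    rw [this]; simp
  have hsymm : IsSymmSndFDerivAt ℝ F (s, t) := by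
    exact ContDiffAt.isSymmSndFDerivAt hf.contDiffAt (by rw [minSmoothness_of_isRCLikeNormedField]; exact two_le_inf)
  rw [h2.deriv]
  have : fderiv ℝ (fun p => fderiv ℝ F p (0, 1)) (s, t) (1, 0)
      = fderiv ℝ (fun p => fderiv ℝ F p (1, 0)) (s, t) (0, 1) := by
    rw [e1, e1]; exact hsymm.eq _ _
  rw [← this] at h2 ⊢
  exact h1

lemma mink_comm (u v : Fin 4 → ℝ) : mink u v = mink v u := by simp [mink]; ring

lemma mink_add_left (u v w : Fin 4 → ℝ) : mink (u + v) w = mink u w + mink v w := by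
  simp [mink]; ring

lemma mink_add_right (u v w : Fin 4 → ℝ) : mink u (v + w) = mink u v + mink u w := by
  simp [mink]; ring

lemma mink_sub_left (u v w : Fin 4 → ℝ) : mink (u - v) w = mink u w - mink v w := by
  simp [mink]; ring

lemma mink_sub_right (u v w : Fin 4 → ℝ) : mink u (v - w) = mink u v - mink u w := by
  simp [mink]; ring

lemma mink_smul_left (a : ℝ) (u w : Fin 4 → ℝ) : mink (a • u) w = a * mink u w := by
  simp [mink]; ring

lemma mink_smul_right (a : ℝ) (u w : Fin 4 → ℝ) : mink u (a • w) = a * mink u w := by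
  simp [mink]; ring

lemma HasDerivAt.mink' {f g : ℝ → (Fin 4 → ℝ)} {f' g' : Fin 4 → ℝ} {x : ℝ}
    (hf : HasDerivAt f f' x) (hg : HasDerivAt g g' x) :
    HasDerivAt (fun y => mink (f y) (g y)) (mink f' (g x) + mink (f x) g') x := by
  have F := fun i => hasDerivAt_pi.1 hf i
  have G := fun i => hasDerivAt_pi.1 hg i
  have h := ((((F 0).mul (G 0)).neg.add ((F 1).mul (G 1))).add ((F 2).mul (G 2))).add
    ((F 3).mul (G 3))
  refine HasDerivAt.congr_deriv (h.congr_of_eventuallyEq (Filter.Eventually.of_forall fun y => ?_)) ?_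
  · simp [mink]
  · simp only [mink]; ring


theorem psi2_equation_pseudo_null
    (γ T N B₁ B₂ : ℝ → ℝ → (Fin 4 → ℝ))
    (k₁ k₂ k₃ α₁ α₂ α₃ α₄ : ℝ → ℝ → ℝ)
    (ψ₁ ψ₂ ψ₃ : ℝ → ℝ → ℝ)
    (hγsmooth : ContDiff ℝ (⊤ : ℕ∞) (fun p : ℝ × ℝ => γ p.1 p.2))
    (hTsmooth : ContDiff ℝ (⊤ : ℕ∞) (fun p : ℝ × ℝ => T p.1 p.2))
    (hNsmooth : ContDiff ℝ (⊤ : ℕ∞) (fun p : ℝ × ℝ => N p.1 p.2))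
    (hB₁smooth : ContDiff ℝ (⊤ : ℕ∞) (fun p : ℝ × ℝ => B₁ p.1 p.2))
    (hB₂smooth : ContDiff ℝ (⊤ : ℕ∞) (fun p : ℝ × ℝ => B₂ p.1 p.2))
    (hk₂smooth : ContDiff ℝ (⊤ : ℕ∞) (fun p : ℝ × ℝ => k₂ p.1 p.2))
    (hk₃smooth : ContDiff ℝ (⊤ : ℕ∞) (fun p : ℝ × ℝ => k₃ p.1 p.2))
    (hα₁smooth : ContDiff ℝ (⊤ : ℕ∞) (fun p : ℝ × ℝ => α₁ p.1 p.2))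
    (hα₂smooth : ContDiff ℝ (⊤ : ℕ∞) (fun p : ℝ × ℝ => α₂ p.1 p.2))
    (hα₃smooth : ContDiff ℝ (⊤ : ℕ∞) (fun p : ℝ × ℝ => α₃ p.1 p.2))
    (hα₄smooth : ContDiff ℝ (⊤ : ℕ∞) (fun p : ℝ × ℝ => α₄ p.1 p.2))
    (hTT : ∀ s t : ℝ, mink (T s t) (T s t) = 1)
    (hB₁B₁ : ∀ s t : ℝ, mink (B₁ s t) (B₁ s t) = 1)
    (hNN : ∀ s t : ℝ, mink (N s t) (N s t) = 0)
    (hB₂B₂ : ∀ s t : ℝ, mink (B₂ s t) (B₂ s t) = 0)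
    (hNB₂ : ∀ s t : ℝ, mink (N s t) (B₂ s t) = 1)
    (hTN : ∀ s t : ℝ, mink (T s t) (N s t) = 0)
    (hTB₁ : ∀ s t : ℝ, mink (T s t) (B₁ s t) = 0)
    (hTB₂ : ∀ s t : ℝ, mink (T s t) (B₂ s t) = 0)
    (hNB₁ : ∀ s t : ℝ, mink (N s t) (B₁ s t) = 0)
    (hB₁B₂ : ∀ s t : ℝ, mink (B₁ s t) (B₂ s t) = 0)
    -- arclength parametrization and pseudo null Frenet equations (k₁ = 1)
    (hk₁ : ∀ s t : ℝ, k₁ s t = 1)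
    (hT : ∀ s t : ℝ, T s t = deriv (fun x => γ x t) s)
    (hunit : ∀ s t : ℝ, mnorm (deriv (fun x => γ x t) s) = 1)
    (hfr₁ : ∀ s t : ℝ, deriv (fun x => T x t) s = k₁ s t • N s t)
    (hfr₂ : ∀ s t : ℝ, deriv (fun x => N x t) s = k₂ s t • B₁ s t)
    (hfr₃ : ∀ s t : ℝ, deriv (fun x => B₁ x t) s = k₃ s t • N s t - k₂ s t • B₂ s t)
    (hfr₄ : ∀ s t : ℝ, deriv (fun x => B₂ x t) s = -(k₁ s t) • T s t - k₃ s t • B₁ s t)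
    (hflow : ∀ s t : ℝ, deriv (fun x => γ s x) t =
      α₁ s t • T s t + α₂ s t • N s t + α₃ s t • B₁ s t + α₄ s t • B₂ s t)
    -- inextensibility: ∂α₁/∂s = α₄
    (hinext : ∀ s t : ℝ, deriv (fun x => α₁ x t) s = α₄ s t)
    (hψ₁ : ∀ s t : ℝ, ψ₁ s t = mink (deriv (fun x => N s x) t) (B₁ s t))
    (hψ₂ : ∀ s t : ℝ, ψ₂ s t = mink (deriv (fun x => N s x) t) (B₂ s t))
    (hψ₃ : ∀ s t : ℝ, ψ₃ s t = mink (deriv (fun x => B₁ s x) t) (B₂ s t)) :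
    ∀ s t : ℝ, deriv (fun x => ψ₂ x t) s =
      deriv (fun x => α₄ x t) s - α₃ s t * k₂ s t - ψ₁ s t * k₃ s t + ψ₃ s t * k₂ s t := by
  intro s t
  -- abbreviations for time-derivatives of the frame at (s,t)
  set Nt := deriv (fun y => N s y) t with hNtdef
  set Tt := deriv (fun y => T s y) t with hTtdef
  set B₁t := deriv (fun y => B₁ s y) t with hB₁tdef
  set k₂t := deriv (fun y => k₂ s y) t with hk₂tdef
  -- single-variable derivatives of frame fields in s
  have hT1 : HasDerivAt (fun x => T x t) (k₁ s t • N s t) s := by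
    have h := (diffAt_fst hTsmooth s t).hasDerivAt; rwa [hfr₁ s t] at h
  have hN1 : HasDerivAt (fun x => N x t) (k₂ s t • B₁ s t) s := by
    have h := (diffAt_fst hNsmooth s t).hasDerivAt; rwa [hfr₂ s t] at h
  have hB₁1 : HasDerivAt (fun x => B₁ x t) (k₃ s t • N s t - k₂ s t • B₂ s t) s := by
    have h := (diffAt_fst hB₁smooth s t).hasDerivAt; rwa [hfr₃ s t] at h
  have hB₂1 : HasDerivAt (fun x => B₂ x t) (-(k₁ s t) • T s t - k₃ s t • B₁ s t) s := by
    have h := (diffAt_fst hB₂smooth s t).hasDerivAt; rwa [hfr₄ s t] at h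
  -- mixed derivative of N, with swap and Frenet equation
  have hNt1 : HasDerivAt (fun x => deriv (fun y => N x y) t)
      (k₂ s t • B₁t + k₂t • B₁ s t) s := by
    have h := hasDerivAt_mixed hNsmooth s t
    have e1 : (fun y => deriv (fun x => N x y) s) = fun y => k₂ s y • B₁ s y := by
      funext y; exact hfr₂ s y
    rw [e1] at h
    have h2 : HasDerivAt (fun y => k₂ s y • B₁ s y) (k₂ s t • B₁t + k₂t • B₁ s t) t :=
      HasDerivAt.smul (diffAt_snd hk₂smooth s t).hasDerivAt (diffAt_snd hB₁smooth s t).hasDerivAt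
    rwa [h2.deriv] at h
  -- the time-derivative of T equals the s-derivative of the flow
  have hTtval : Tt =
      (α₁ s t • (k₁ s t • N s t) + deriv (fun x => α₁ x t) s • T s t)
      + (α₂ s t • (k₂ s t • B₁ s t) + deriv (fun x => α₂ x t) s • N s t)
      + (α₃ s t • (k₃ s t • N s t - k₂ s t • B₂ s t) + deriv (fun x => α₃ x t) s • B₁ s t)
      + (α₄ s t • (-(k₁ s t) • T s t - k₃ s t • B₁ s t) + deriv (fun x => α₄ x t) s • B₂ s t) := by
    have h := hasDerivAt_mixed hγsmooth s t
    have e1 : (fun y => deriv (fun x => γ x y) s) = fun y => T s y := by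
      funext y; exact (hT s y).symm
    have e2 : (fun x => deriv (fun y => γ x y) t) = fun x =>
        α₁ x t • T x t + α₂ x t • N x t + α₃ x t • B₁ x t + α₄ x t • B₂ x t := by
      funext x; exact hflow x t
    rw [e1, e2] at h
    have hRHS : HasDerivAt (fun x =>
        α₁ x t • T x t + α₂ x t • N x t + α₃ x t • B₁ x t + α₄ x t • B₂ x t)
        ((α₁ s t • (k₁ s t • N s t) + deriv (fun x => α₁ x t) s • T s t)
        + (α₂ s t • (k₂ s t • B₁ s t) + deriv (fun x => α₂ x t) s • N s t)
        + (α₃ s t • (k₃ s t • N s t - k₂ s t • B₂ s t) + deriv (fun x => α₃ x t) s • B₁ s t)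
        + (α₄ s t • (-(k₁ s t) • T s t - k₃ s t • B₁ s t) + deriv (fun x => α₄ x t) s • B₂ s t)) s := by
      exact (((HasDerivAt.smul (diffAt_fst hα₁smooth s t).hasDerivAt hT1).add
        (HasDerivAt.smul (diffAt_fst hα₂smooth s t).hasDerivAt hN1)).add
        (HasDerivAt.smul (diffAt_fst hα₃smooth s t).hasDerivAt hB₁1)).add
        (HasDerivAt.smul (diffAt_fst hα₄smooth s t).hasDerivAt hB₂1)
    exact h.unique hRHS
  -- relation ⟨Nt, T⟩ + ⟨N, Tt⟩ = 0
  have hrel : mink Nt (T s t) + mink (N s t) Tt = 0 := by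
    have hprod : HasDerivAt (fun y => mink (N s y) (T s y))
        (mink Nt (T s t) + mink (N s t) Tt) t :=
      HasDerivAt.mink' (diffAt_snd hNsmooth s t).hasDerivAt (diffAt_snd hTsmooth s t).hasDerivAt
    have hconst : (fun y => mink (N s y) (T s y)) = fun _ => (0 : ℝ) := by
      funext y; rw [mink_comm]; exact hTN s y
    rw [hconst] at hprod
    exact hprod.unique (hasDerivAt_const t 0)
  -- ⟨N, Tt⟩ = α₄' - α₃ k₂
  have hNTt : mink (N s t) Tt = deriv (fun x => α₄ x t) s - α₃ s t * k₂ s t := by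
    rw [hTtval]
    have hNT : mink (N s t) (T s t) = 0 := by rw [mink_comm]; exact hTN s t
    simp only [mink_add_right, mink_sub_right, mink_smul_right]
    rw [hNT, hNN s t, hNB₁ s t, hNB₂ s t]
    ring
  have hNtT : mink Nt (T s t) = α₃ s t * k₂ s t - deriv (fun x => α₄ x t) s := by
    have := hrel; rw [hNTt] at this; linarith
  -- derivative of ψ₂ in s
  have hD : HasDerivAt (fun x => ψ₂ x t)
      (mink (k₂ s t • B₁t + k₂t • B₁ s t) (B₂ s t)
        + mink Nt (-(k₁ s t) • T s t - k₃ s t • B₁ s t)) s := by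
    have e : (fun x => ψ₂ x t) = fun x => mink (deriv (fun y => N x y) t) (B₂ x t) := by
      funext x; exact hψ₂ x t
    rw [e]
    exact HasDerivAt.mink' hNt1 hB₂1
  rw [hD.deriv]
  simp only [mink_add_left, mink_smul_left, mink_sub_right, mink_smul_right]
  rw [hB₁B₂ s t, hNtT, hk₁ s t, hψ₁ s t, hψ₃ s t]
  rw [hNtdef, hB₁tdef]
  ring
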